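/- arXiv:1001.4994 — 2 statements merged into one kernel-verified Lean document; each statement's English description precedes it below -/
import Mathlib

section
/- Let v̂(p) be the 2×2 matrix (indexed by ω, ω' ∈ {±1}) with entries v̂_{ω,ω'}(p) = ½[iω·Ĝ¹⁰(p) + iω'·Ĝ⁰¹(p) + Ĝ⁰⁰(p) − ωω'·Ĝ¹¹(p)], where Ĝ^{μν}(p) = δ^{μν}/(p²+μ²) − (1/(p²+μ²) − 1/(αp²+μ²−σ))·p^μp^ν/p². Then the inverse matrix satisfies (v̂⁻¹(p))_{ω,ω'} = (p²+μ²)δ_{ω,−ω'} − ½(1−α+σ/p²)[(p⁰)² − ωω'(p¹)² − i(ω+ω')p⁰p¹] for all p ≠ 0 with αp² + μ² − σ ≠ 0 and p² + μ² ≠ 0. -/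
/-- The components of `p ∈ ℝ²` as a function `Fin 2 → ℝ`. -/
def kvec (p : ℝ × ℝ) : Fin 2 → ℝ := ![p.1, p.2]

/-- `p² = (p⁰)² + (p¹)²`. -/
def ksq (p : ℝ × ℝ) : ℝ := p.1 ^ 2 + p.2 ^ 2

/-- The free meson propagator
`Ĝ^{μν}(p) = δ^{μν}/(p²+μ²) − (1/(p²+μ²) − 1/(αp²+μ²−σ)) p^μp^ν/p²`. -/
noncomputable def Ghat (α σ msq : ℝ) (p : ℝ × ℝ) (μ ν : Fin 2) : ℝ :=
  (if μ = ν then 1 else 0) / (ksq p + msq)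
    - (1 / (ksq p + msq) - 1 / (α * ksq p + msq - σ)) * kvec p μ * kvec p ν / ksq p

/-- `v̂_{ω,ω'}(p) = ½[iω Ĝ¹⁰(p) + iω' Ĝ⁰¹(p) + Ĝ⁰⁰(p) − ωω' Ĝ¹¹(p)]`. -/
noncomputable def vhat (α σ msq : ℝ) (p : ℝ × ℝ) (ω ω' : ℝ) : ℂ :=
  (1 / 2) * (Complex.I * (ω : ℂ) * ((Ghat α σ msq p 1 0 : ℝ) : ℂ)
    + Complex.I * (ω' : ℂ) * ((Ghat α σ msq p 0 1 : ℝ) : ℂ)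
    + ((Ghat α σ msq p 0 0 : ℝ) : ℂ)
    - (ω : ℂ) * (ω' : ℂ) * ((Ghat α σ msq p 1 1 : ℝ) : ℂ))

/-- The claimed explicit inverse
`(v̂⁻¹(p))_{ω,ω'} = (p²+μ²)δ_{ω,−ω'} − ½(1−α+σ/p²)[(p⁰)² − ωω'(p¹)² − i(ω+ω')p⁰p¹]`. -/
noncomputable def vinv (α σ msq : ℝ) (p : ℝ × ℝ) (ω ω' : ℝ) : ℂ :=
  ((ksq p + msq : ℝ) : ℂ) * (if ω' = -ω then 1 else 0)
    - (1 / 2) * ((1 - α + σ / ksq p : ℝ) : ℂ) *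
      ((p.1 : ℂ) ^ 2 - (ω : ℂ) * (ω' : ℂ) * (p.2 : ℂ) ^ 2
        - Complex.I * ((ω : ℂ) + (ω' : ℂ)) * (p.1 : ℂ) * (p.2 : ℂ))

set_option maxHeartbeats 1000000 in
/-- Factorized closed form of `vhat`. -/
lemma vhat_eq (α σ msq : ℝ) (p : ℝ × ℝ) (ω ω' : ℝ) :
    vhat α σ msq p ω ω' = (1 / 2) * ((1 - (ω:ℂ) * ω') / ((ksq p : ℂ) + msq)
      - ((1 / ((ksq p : ℂ) + msq) - 1 / ((α:ℂ) * ksq p + msq - σ)) / (ksq p : ℂ))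
        * (((p.1:ℂ) + Complex.I * ω * p.2) * ((p.1:ℂ) + Complex.I * ω' * p.2))) := by
  simp only [vhat, Ghat, kvec]
  norm_num [Matrix.cons_val_zero, Matrix.cons_val_one, Matrix.head_cons]
  push_cast
  ring_nf
  simp only [Complex.I_sq]
  ring

set_option maxHeartbeats 1000000 in
/-- Factorized closed form of `vinv`. -/
lemma vinv_eq (α σ msq : ℝ) (p : ℝ × ℝ) (ω ω' : ℝ) :
    vinv α σ msq p ω ω' = ((ksq p : ℂ) + msq) * (if ω' = -ω then 1 else 0)
      - (1 / 2) * (1 - (α:ℂ) + (σ:ℂ) / (ksq p : ℂ)) *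
        (((p.1:ℂ) - Complex.I * ω * p.2) * ((p.1:ℂ) - Complex.I * ω' * p.2)) := by
  simp only [vinv]
  push_cast
  ring_nf
  simp only [Complex.I_sq]
  ring

set_option maxHeartbeats 4000000 in
/-- `vinv` is indeed the inverse matrix of `v̂(p)` on the index set `{+1,−1}`. -/
theorem stmt7 (α σ msq : ℝ) (hm : 0 < msq) (hσ : σ < msq) (hα : 0 < α)
    (p : ℝ × ℝ) (hp : p ≠ 0) (h1 : α * ksq p + msq - σ ≠ 0) (h2 : ksq p + msq ≠ 0) :
    ∀ ω ∈ ({1, -1} : Finset ℝ), ∀ ω' ∈ ({1, -1} : Finset ℝ),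
      (∑ s ∈ ({1, -1} : Finset ℝ), vhat α σ msq p ω s * vinv α σ msq p s ω')
        = (if ω = ω' then 1 else 0) ∧
      (∑ s ∈ ({1, -1} : Finset ℝ), vinv α σ msq p ω s * vhat α σ msq p s ω')
        = (if ω = ω' then 1 else 0) := by
  have hk : ksq p ≠ 0 := by
    have hne : p.1 ≠ 0 ∨ p.2 ≠ 0 := by
      by_contra h; push_neg at h; exact hp (Prod.ext h.1 h.2)
    have : 0 < ksq p := by
      rcases hne with h | h <;> unfold ksq <;> positivity
    exact ne_of_gt this
  have hkC : ((ksq p : ℝ) : ℂ) ≠ 0 := by exact_mod_cast hk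
  have h1C : ((α:ℂ) * ksq p + msq - σ) ≠ 0 := by
    have : ((α * ksq p + msq - σ : ℝ) : ℂ) ≠ 0 := Complex.ofReal_ne_zero.mpr h1
    push_cast at this; exact this
  have h2C : ((ksq p : ℂ) + msq) ≠ 0 := by
    have : ((ksq p + msq : ℝ) : ℂ) ≠ 0 := Complex.ofReal_ne_zero.mpr h2
    push_cast at this; exact this
  have hK : (p.1:ℂ)^2 + (p.2:ℂ)^2 = ((ksq p : ℝ) : ℂ) := by
    unfold ksq; push_cast; ring
  intro a ha b hb
  simp only [Finset.mem_insert, Finset.mem_singleton] at ha hb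
  rcases ha with rfl | rfl <;> rcases hb with rfl | rfl <;>
  · constructor <;>
    · rw [Finset.sum_insert (by norm_num), Finset.sum_singleton,
        vhat_eq, vhat_eq, vinv_eq, vinv_eq]
      norm_num
      generalize hKd : ((ksq p : ℝ):ℂ) = K at hkC h1C h2C hK ⊢
      field_simp
      simp only [← sub_eq_add_neg]
      generalize hz : ((p.1:ℂ) + Complex.I * (p.2:ℂ)) = z at *
      generalize hw : ((p.1:ℂ) - Complex.I * (p.2:ℂ)) = w at *
      have hzw : z * w = K := by
        rw [← hz, ← hw, ← hK]; ring_nf; simp only [Complex.I_sq]; ring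
      rw [← hzw] at hkC h1C h2C ⊢
      obtain ⟨hz0, hw0⟩ := mul_ne_zero_iff.mp hkC
      have h1C' : z * w * (α:ℂ) + msq - σ ≠ 0 := by rw [mul_comm]; exact h1C
      field_simp
      ring
end

section
/- Let v be a measurable function on ℝ² with ‖v‖_{L³} ≤ B₃·γ^{(4/3)M}, and for k ≤ i,j,p,... ≤ N let g^{(j)} satisfy ‖g^{(j)}‖_{L^∞} ≤ c γ^j, ‖g^{(j)}‖_{L¹} ≤ c γ^{-j}, ‖g^{(j)}‖_{L^{3/2}} ≤ c γ^{-j/3}. Then for every fixed z', w', u the triple-propagator loop obeys Σ_{j,q,p=k}^{N} ∫∫ dw du' |v(u'−z')| |g^{(j)}(u'−w)| |g^{(q)}(u'−w')| |g^{(p)}(w−u)| ≤ C₄·γ^{(4/3)M}·γ^{-k/3}, with C₄ depending only on c, B₃, γ. -/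
open MeasureTheory Finset
open scoped ENNReal

private lemma zpow_lt_one'' {t : ℝ} (h0 : 0 < t) (h1 : t < 1) {e : ℤ} (he : 0 < e) :
    t ^ e < 1 := by
  rw [← Real.rpow_intCast t e]
  exact Real.rpow_lt_one h0.le h1 (by exact_mod_cast he)

private lemma geomIcc {s : ℝ} (h0 : 0 < s) (h1 : s < 1) (a b : ℤ) :
    ∑ i ∈ Finset.Icc a b, s ^ i ≤ s ^ a / (1 - s) := by
  have hs1 : (0:ℝ) < 1 - s := by linarith
  rcases le_or_gt a b with h | h
  · have key : ∀ n : ℕ, ∑ i ∈ Finset.Icc a (a + (n:ℤ)), s ^ i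
        = (s ^ a - s ^ (a + (n:ℤ) + 1)) / (1 - s) := by
      intro n
      induction n with
      | zero =>
        simp only [Nat.cast_zero, add_zero]
        rw [Finset.Icc_self, Finset.sum_singleton, eq_div_iff hs1.ne',
          zpow_add_one₀ h0.ne']
        ring
      | succ n ih =>
        have hins : Finset.Icc a (a + ((n:ℤ)+1)) = insert (a + (n:ℤ) + 1) (Finset.Icc a (a + (n:ℤ))) := by
          ext x; simp [Finset.mem_Icc, Finset.mem_insert]; omega
        push_cast
        rw [hins, Finset.sum_insert (by simp [Finset.mem_Icc])]
        push_cast at ih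
        rw [ih, eq_div_iff hs1.ne']
        have e1 : s ^ (a + (n:ℤ) + 1 + 1) = s ^ (a + (n:ℤ) + 1) * s := by
          rw [zpow_add_one₀ h0.ne']
        field_simp
        rw [show a + ((n:ℤ) + 1) + 1 = a + (n:ℤ) + 1 + 1 by ring, e1]
        ring
    obtain ⟨n, rfl⟩ : ∃ n : ℕ, b = a + (n:ℤ) := ⟨(b - a).toNat, by omega⟩
    rw [key]
    have : s ^ a - s ^ (a + (n:ℤ) + 1) ≤ s ^ a := by
      have : (0:ℝ) ≤ s ^ (a + (n:ℤ) + 1) := by positivity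
      linarith
    exact (div_le_div_iff_of_pos_right hs1).mpr this
  · rw [Finset.Icc_eq_empty (by omega)]
    simp only [Finset.sum_empty]
    positivity

private lemma geomCond {s : ℝ} (h0 : 0 < s) (h1 : s < 1) (a k N : ℤ) :
    ∑ i ∈ Finset.Icc k N, (if a ≤ i then s ^ i else 0) ≤ s ^ a / (1 - s) := by
  calc ∑ i ∈ Finset.Icc k N, (if a ≤ i then s ^ i else 0)
      = ∑ i ∈ (Finset.Icc k N).filter (fun i => a ≤ i), s ^ i := by
        rw [Finset.sum_filter]
    _ ≤ ∑ i ∈ Finset.Icc a (max N a), s ^ i := by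
        apply Finset.sum_le_sum_of_subset_of_nonneg
        · intro x hx
          simp only [Finset.mem_filter, Finset.mem_Icc] at hx ⊢
          omega
        · intro i _ _; positivity
    _ ≤ s ^ a / (1 - s) := geomIcc h0 h1 _ _

private lemma if_and_split {t : ℝ} (h0 : 0 < t) (a b m i x y : ℤ) :
    (if i ≤ x ∧ i ≤ y then t ^ (a*x + b*y - m*i) else 0)
      = (t ^ (-(m*i)) * (if i ≤ x then (t^a) ^ x else 0)) * (if i ≤ y then (t^b) ^ y else 0) := by
  by_cases h1 : i ≤ x
  · by_cases h2 : i ≤ y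
    · rw [if_pos (⟨h1, h2⟩ : i ≤ x ∧ i ≤ y), if_pos h1, if_pos h2, ← zpow_mul, ← zpow_mul,
        show a*x + b*y - m*i = (-(m*i)) + a*x + b*y from by ring, zpow_add₀ h0.ne',
        zpow_add₀ h0.ne', zpow_neg]
    · rw [if_neg (by tauto), if_neg h2, mul_zero]
  · rw [if_neg (by tauto), if_neg h1, mul_zero, zero_mul]

private lemma triple_geom {t : ℝ} (h0 : 0 < t) (h1 : t < 1) (k N : ℤ)
    (a b m : ℤ) (ha : 0 < a) (hb : 0 < b) (habm : a + b - m = 3) :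
    ∑ i ∈ Finset.Icc k N, ∑ x ∈ Finset.Icc k N, ∑ y ∈ Finset.Icc k N,
        (if i ≤ x ∧ i ≤ y then t ^ (a*x + b*y - m*i) else 0)
      ≤ (1/(1-t^a)) * (1/(1-t^b)) * ((t^(3:ℤ))^k / (1 - t^(3:ℤ))) := by
  have hta : t ^ a < 1 := zpow_lt_one'' h0 h1 ha
  have htb : t ^ b < 1 := zpow_lt_one'' h0 h1 hb
  have ht3 : t ^ (3:ℤ) < 1 := zpow_lt_one'' h0 h1 (by norm_num)
  have hta0 : 0 < t ^ a := zpow_pos h0 a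
  have htb0 : 0 < t ^ b := zpow_pos h0 b
  have ht30 : 0 < t ^ (3:ℤ) := zpow_pos h0 3
  have step1 : ∀ i x : ℤ, ∑ y ∈ Finset.Icc k N,
      (if i ≤ x ∧ i ≤ y then t ^ (a*x + b*y - m*i) else 0)
      ≤ (t ^ (-(m*i)) * (if i ≤ x then (t^a) ^ x else 0)) * ((t^b)^i / (1 - t^b)) := by
    intro i x
    simp only [if_and_split h0 a b m i x]
    rw [← Finset.mul_sum]
    refine mul_le_mul_of_nonneg_left (geomCond htb0 htb i k N) ?_
    apply mul_nonneg (by positivity)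
    split_ifs <;> positivity
  have step2 : ∀ i : ℤ, ∑ x ∈ Finset.Icc k N,
      (t ^ (-(m*i)) * (if i ≤ x then (t^a) ^ x else 0)) * ((t^b)^i / (1 - t^b))
      ≤ t ^ (-(m*i)) * ((t^a)^i / (1 - t^a)) * ((t^b)^i / (1 - t^b)) := by
    intro i
    have : ∑ x ∈ Finset.Icc k N, (t ^ (-(m*i)) * (if i ≤ x then (t^a) ^ x else 0)) * ((t^b)^i / (1 - t^b))
        = (t ^ (-(m*i)) * ∑ x ∈ Finset.Icc k N, (if i ≤ x then (t^a) ^ x else 0)) * ((t^b)^i / (1 - t^b)) := by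
      rw [Finset.mul_sum, Finset.sum_mul]
    rw [this]
    apply mul_le_mul_of_nonneg_right _ (div_nonneg (by positivity) (by linarith))
    apply mul_le_mul_of_nonneg_left (geomCond hta0 hta i k N) (by positivity)
  have step3 : ∀ i : ℤ, t ^ (-(m*i)) * ((t^a)^i / (1 - t^a)) * ((t^b)^i / (1 - t^b))
      = (1/(1-t^a)) * (1/(1-t^b)) * (t^(3:ℤ))^i := by
    intro i
    rw [← zpow_mul, ← zpow_mul, ← zpow_mul]
    rw [show (3:ℤ)*i = -(m*i) + a*i + b*i from by linear_combination (-i) * habm]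
    rw [zpow_add₀ h0.ne', zpow_add₀ h0.ne']
    field_simp
  calc ∑ i ∈ Finset.Icc k N, ∑ x ∈ Finset.Icc k N, ∑ y ∈ Finset.Icc k N,
        (if i ≤ x ∧ i ≤ y then t ^ (a*x + b*y - m*i) else 0)
      ≤ ∑ i ∈ Finset.Icc k N, (1/(1-t^a)) * (1/(1-t^b)) * (t^(3:ℤ))^i := by
        apply Finset.sum_le_sum
        intro i _
        calc ∑ x ∈ Finset.Icc k N, ∑ y ∈ Finset.Icc k N,
              (if i ≤ x ∧ i ≤ y then t ^ (a*x + b*y - m*i) else 0)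
            ≤ ∑ x ∈ Finset.Icc k N,
              (t ^ (-(m*i)) * (if i ≤ x then (t^a) ^ x else 0)) * ((t^b)^i / (1 - t^b)) :=
              Finset.sum_le_sum fun x _ => step1 i x
          _ ≤ t ^ (-(m*i)) * ((t^a)^i / (1 - t^a)) * ((t^b)^i / (1 - t^b)) := step2 i
          _ = (1/(1-t^a)) * (1/(1-t^b)) * (t^(3:ℤ))^i := step3 i
    _ = (1/(1-t^a)) * (1/(1-t^b)) * ∑ i ∈ Finset.Icc k N, (t^(3:ℤ))^i := by
        rw [Finset.mul_sum]
    _ ≤ (1/(1-t^a)) * (1/(1-t^b)) * ((t^(3:ℤ))^k / (1 - t^(3:ℤ))) := by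
        have ia : (0:ℝ) < 1/(1-t^a) := by rw [one_div]; exact inv_pos.mpr (by linarith)
        have ib : (0:ℝ) < 1/(1-t^b) := by rw [one_div]; exact inv_pos.mpr (by linarith)
        exact mul_le_mul_of_nonneg_left (geomIcc ht30 ht3 k N) (mul_pos ia ib).le

private lemma rpow_prod2 {γ : ℝ} (hγ : 0 < γ) (c1 c2 a b : ℝ) :
    (c1 * γ ^ a) * (c2 * γ ^ b) = (c1 * c2) * γ ^ (a + b) := by
  rw [Real.rpow_add hγ]; ring

private lemma rid1 {γ c : ℝ} (hγ : 0 < γ) (hc : 0 ≤ c) (a b E : ℝ) (hE : 2 * E = a + b) :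
    ((c * γ ^ a) ^ ((3:ℝ)/2) * (c * γ ^ b) ^ ((3:ℝ)/2)) ^ ((1:ℝ)/3) = c * γ ^ E := by
  have hgE : (0:ℝ) ≤ c * γ ^ E := by positivity
  have key : (c * γ ^ a) * (c * γ ^ b) = (c * γ ^ E) ^ (2:ℕ) := by
    have l : (c * γ ^ a) * (c * γ ^ b) = c ^ 2 * (γ ^ a * γ ^ b) := by ring
    have r : (c * γ ^ E) ^ (2:ℕ) = c ^ 2 * (γ ^ E * γ ^ E) := by ring
    rw [l, r, ← Real.rpow_add hγ, ← Real.rpow_add hγ, show a + b = E + E from by linarith]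
  rw [← Real.mul_rpow (by positivity) (by positivity), key,
    ← Real.rpow_natCast (c * γ ^ E) 2, ← Real.rpow_mul hgE, ← Real.rpow_mul hgE]
  norm_num

private lemma collapse3 {γ c : ℝ} (hγ : 0 < γ) (hc : 0 ≤ c) (u vj vp E : ℝ)
    (hE : 3 * E = 2 * u + vj + vp) :
    (c^2 * γ ^ u) * (c^2 * γ ^ u) * ((c * γ ^ vj) * (c * γ ^ vp)) = (c^2 * γ ^ E) ^ (3:ℕ) := by
  have l : (c^2 * γ ^ u) * (c^2 * γ ^ u) * ((c * γ ^ vj) * (c * γ ^ vp))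
      = c ^ 6 * (γ ^ u * γ ^ u * (γ ^ vj * γ ^ vp)) := by ring
  have r : (c^2 * γ ^ E) ^ (3:ℕ) = c ^ 6 * (γ ^ E * γ ^ E * γ ^ E) := by ring
  rw [l, r, ← Real.rpow_add hγ, ← Real.rpow_add hγ, ← Real.rpow_add hγ,
    ← Real.rpow_add hγ, ← Real.rpow_add hγ,
    show u + u + (vj + vp) = E + E + E from by linarith]

private lemma cube_root {X : ℝ} (hX : 0 ≤ X) :
    (ENNReal.ofReal (X ^ (3:ℕ))) ^ ((1:ℝ)/3) = ENNReal.ofReal X := by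
  rw [ENNReal.ofReal_pow hX, ← ENNReal.rpow_natCast (ENNReal.ofReal X) 3,
    ← ENNReal.rpow_mul]
  norm_num

/-- The uniform-in-`N` triple-propagator loop estimate: if `‖v‖_{L³} ≤ B₃ γ^{4M/3}`
and the single-scale propagators `g^{(j)}`, `k ≤ j ≤ N`, satisfy
`‖g^{(j)}‖_∞ ≤ c γ^j`, `‖g^{(j)}‖_{L¹} ≤ c γ^{-j}`, `‖g^{(j)}‖_{L^{3/2}} ≤ c γ^{-j/3}`,
then for all fixed `z', w', u`,
`Σ_{j,q,p=k}^{N} ∫∫ dw du' |v(u'−z')| |g^{(j)}(u'−w)| |g^{(q)}(u'−w')| |g^{(p)}(w−u)|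
  ≤ C₄ γ^{4M/3} γ^{-k/3}`, with `C₄` depending only on `c, B₃, γ`. -/
theorem stmt19 (γ c B3 : ℝ) (hγ : 1 < γ) (hc : 0 < c) (hB : 0 < B3) :
    ∃ C4 > 0, ∀ (M k N : ℤ), k ≤ N →
      ∀ (v : ℝ × ℝ → ℝ) (g : ℤ → ℝ × ℝ → ℂ),
        Measurable v → (∀ j, Measurable (g j)) →
        eLpNorm v 3 volume ≤ ENNReal.ofReal (B3 * γ ^ ((4 : ℝ) / 3 * (M : ℝ))) →
        (∀ j : ℤ, k ≤ j → j ≤ N →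
          eLpNorm (g j) ⊤ volume ≤ ENNReal.ofReal (c * γ ^ j) ∧
          eLpNorm (g j) 1 volume ≤ ENNReal.ofReal (c * γ ^ (-j)) ∧
          eLpNorm (g j) (3 / 2) volume ≤ ENNReal.ofReal (c * γ ^ (-(j : ℝ) / 3))) →
        ∀ z' w' u : ℝ × ℝ,
          ∑ j ∈ Finset.Icc k N, ∑ q ∈ Finset.Icc k N, ∑ p ∈ Finset.Icc k N,
            (∫⁻ u' : ℝ × ℝ, ∫⁻ w : ℝ × ℝ,
              ENNReal.ofReal
                (|v (u' - z')| * ‖g j (u' - w)‖ * ‖g q (u' - w')‖ * ‖g p (w - u)‖))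
          ≤ ENNReal.ofReal (C4 * γ ^ ((4 : ℝ) / 3 * (M : ℝ)) * γ ^ (-(k : ℝ) / 3)) := by
  have hγ0 : (0:ℝ) < γ := lt_trans one_pos hγ
  set t : ℝ := γ ^ (-(1/9 : ℝ)) with ht_def
  have ht0 : 0 < t := Real.rpow_pos_of_pos hγ0 _
  have ht1 : t < 1 := Real.rpow_lt_one_of_one_lt_of_neg hγ (by norm_num)
  have h3lt : t ^ (3:ℤ) < 1 := zpow_lt_one'' ht0 ht1 (by norm_num)
  have h1lt : t ^ (1:ℤ) < 1 := zpow_lt_one'' ht0 ht1 (by norm_num)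
  have h5lt : t ^ (5:ℤ) < 1 := zpow_lt_one'' ht0 ht1 (by norm_num)
  have i3 : (0:ℝ) < 1/(1-t^(3:ℤ)) := by
    rw [one_div]; exact inv_pos.mpr (by linarith)
  have i1 : (0:ℝ) < 1/(1-t^(1:ℤ)) := by
    rw [zpow_one, one_div]
    have h1lt' : t < 1 := ht1
    exact inv_pos.mpr (by linarith)
  have i5 : (0:ℝ) < 1/(1-t^(5:ℤ)) := by
    rw [one_div]; exact inv_pos.mpr (by linarith)
  set C0 : ℝ := ((1/(1-t^(3:ℤ))) * (1/(1-t^(3:ℤ))) + (1/(1-t^(3:ℤ))) * (1/(1-t^(3:ℤ)))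
      + (1/(1-t^(1:ℤ))) * (1/(1-t^(5:ℤ)))) * (1/(1-t^(3:ℤ))) with hC0_def
  have hC0 : 0 < C0 := by
    apply mul_pos _ i3
    have := mul_pos i3 i3
    have := mul_pos i1 i5
    linarith
  refine ⟨c^3 * B3 * C0, by positivity, ?_⟩
  intro M k N hkN v g hv hmg hv3 hbounds z' w' u
  set W : ℝ := B3 * γ ^ ((4 : ℝ) / 3 * (M : ℝ)) with hW_def
  have hW0 : (0:ℝ) ≤ W := by positivity
  -- measurability
  have mG : ∀ i, Measurable fun x : ℝ×ℝ => (‖g i x‖₊ : ℝ≥0∞) := fun i => (hmg i).nnnorm.coe_nnreal_ennreal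
  have mV : Measurable fun x : ℝ×ℝ => (‖v x‖₊ : ℝ≥0∞) := hv.nnnorm.coe_nnreal_ennreal
  -- translation invariance
  have trL : ∀ (h : ℝ×ℝ → ℝ≥0∞), Measurable h → ∀ a : ℝ×ℝ, ∫⁻ x, h (a - x) = ∫⁻ x, h x :=
    fun h hh a => (Measure.measurePreserving_sub_left volume a).lintegral_comp hh
  have trR : ∀ (h : ℝ×ℝ → ℝ≥0∞), Measurable h → ∀ a : ℝ×ℝ, ∫⁻ x, h (x - a) = ∫⁻ x, h x :=
    fun h hh a => (measurePreserving_sub_right volume a).lintegral_comp hh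
  -- Hölder
  have holder : ∀ (f h : ℝ×ℝ → ℝ≥0∞) (pe qe : ℝ), Real.HolderConjugate pe qe →
      Measurable f → Measurable h →
      ∫⁻ x, f x * h x ≤ (∫⁻ x, f x ^ pe) ^ (1/pe) * (∫⁻ x, h x ^ qe) ^ (1/qe) := by
    intro f h pe qe hpq hf hh
    simpa using ENNReal.lintegral_mul_le_Lp_mul_Lq volume hpq hf.aemeasurable hh.aemeasurable
  -- distilled hypotheses
  have fS : ∀ i ∈ Finset.Icc k N, ∀ᵐ x : ℝ×ℝ, (‖g i x‖₊ : ℝ≥0∞) ≤ ENNReal.ofReal (c * γ ^ ((i:ℝ))) := by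
    intro i hi
    rw [Finset.mem_Icc] at hi
    have h := (hbounds i hi.1 hi.2).1
    rw [eLpNorm_exponent_top, ← Real.rpow_intCast γ i] at h
    exact ae_le_eLpNormEssSup.mono fun x hx => hx.trans h
  have f1 : ∀ i ∈ Finset.Icc k N, ∫⁻ x, (‖g i x‖₊ : ℝ≥0∞) ≤ ENNReal.ofReal (c * γ ^ (-(i:ℝ))) := by
    intro i hi
    rw [Finset.mem_Icc] at hi
    have h := (hbounds i hi.1 hi.2).2.1
    rw [eLpNorm_one_eq_lintegral_enorm, ← Real.rpow_intCast γ (-i)] at h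
    push_cast at h
    exact h
  have f32 : ∀ i ∈ Finset.Icc k N,
      (∫⁻ x, (‖g i x‖₊ : ℝ≥0∞) ^ ((3:ℝ)/2)) ^ ((2:ℝ)/3) ≤ ENNReal.ofReal (c * γ ^ (-(i:ℝ)/3)) := by
    intro i hi
    rw [Finset.mem_Icc] at hi
    have h := (hbounds i hi.1 hi.2).2.2
    rw [eLpNorm_eq_lintegral_rpow_enorm_toReal (by norm_num) (by simp [ENNReal.div_eq_top])] at h
    rw [show ((3:ℝ≥0∞)/2).toReal = (3/2:ℝ) by norm_num [ENNReal.toReal_div]] at h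
    rw [show (1:ℝ)/(3/2) = 2/3 by norm_num] at h
    exact h
  have fV : (∫⁻ x, (‖v x‖₊ : ℝ≥0∞) ^ (3:ℝ)) ^ ((1:ℝ)/3) ≤ ENNReal.ofReal W := by
    have h := hv3
    rw [eLpNorm_eq_lintegral_rpow_enorm_toReal (by norm_num) (by norm_num)] at h
    norm_num at h ⊢
    exact h
  have f3 : ∀ i ∈ Finset.Icc k N,
      (∫⁻ x, (‖g i x‖₊ : ℝ≥0∞) ^ (3:ℝ)) ^ ((1:ℝ)/3) ≤ ENNReal.ofReal (c * γ ^ ((i:ℝ)/3)) := by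
    intro i hi
    have hSi := fS i hi
    have h32 := f32 i hi
    have key : ∫⁻ x, (‖g i x‖₊ : ℝ≥0∞) ^ (3:ℝ)
        ≤ ENNReal.ofReal (c * γ ^ ((i:ℝ))) ^ ((3:ℝ)/2) * ∫⁻ x, (‖g i x‖₊ : ℝ≥0∞) ^ ((3:ℝ)/2) := by
      rw [← lintegral_const_mul' _ _ (ENNReal.rpow_ne_top_of_nonneg (by norm_num) ENNReal.ofReal_ne_top)]
      refine lintegral_mono_ae (hSi.mono fun x hx => ?_)
      have e : (‖g i x‖₊ : ℝ≥0∞) ^ (3:ℝ)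
          = (‖g i x‖₊ : ℝ≥0∞) ^ ((3:ℝ)/2) * (‖g i x‖₊ : ℝ≥0∞) ^ ((3:ℝ)/2) := by
        rw [← ENNReal.rpow_add_of_nonneg _ _ (by norm_num) (by norm_num)]
        norm_num
      rw [e]
      exact mul_le_mul_left (ENNReal.rpow_le_rpow hx (by norm_num)) _
    have h32' : ∫⁻ x, (‖g i x‖₊ : ℝ≥0∞) ^ ((3:ℝ)/2)
        ≤ ENNReal.ofReal (c * γ ^ (-(i:ℝ)/3)) ^ ((3:ℝ)/2) := by
      have h := ENNReal.rpow_le_rpow h32 (z := (3:ℝ)/2) (by norm_num)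
      rwa [← ENNReal.rpow_mul, show (2:ℝ)/3 * (3/2) = 1 by norm_num, ENNReal.rpow_one] at h
    calc (∫⁻ x, (‖g i x‖₊ : ℝ≥0∞) ^ (3:ℝ)) ^ ((1:ℝ)/3)
        ≤ (ENNReal.ofReal (c * γ ^ ((i:ℝ))) ^ ((3:ℝ)/2)
            * ENNReal.ofReal (c * γ ^ (-(i:ℝ)/3)) ^ ((3:ℝ)/2)) ^ ((1:ℝ)/3) :=
          ENNReal.rpow_le_rpow (key.trans (mul_le_mul_right h32' _)) (by norm_num)
      _ = ENNReal.ofReal (c * γ ^ ((i:ℝ)/3)) := by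
          rw [ENNReal.ofReal_rpow_of_nonneg (by positivity) (by norm_num),
            ENNReal.ofReal_rpow_of_nonneg (by positivity) (by norm_num),
            ← ENNReal.ofReal_mul (by positivity),
            ENNReal.ofReal_rpow_of_nonneg (by positivity) (by norm_num)]
          congr 1
          exact rid1 hγ0 hc.le (i:ℝ) (-(i:ℝ)/3) ((i:ℝ)/3) (by ring)
  -- the local exponent function
  set T : ℤ → ℤ → ℤ → ℝ := fun j q p =>
      (if j ≤ q ∧ j ≤ p then γ ^ (((j:ℝ) - (q:ℝ) - (p:ℝ))/3) else 0)
      + (if p ≤ j ∧ p ≤ q then γ ^ (((p:ℝ) - (j:ℝ) - (q:ℝ))/3) else 0)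
      + (if q ≤ j ∧ q ≤ p then γ ^ ((3*(q:ℝ) - (j:ℝ) - 5*(p:ℝ))/9) else 0) with hT_def
  have hTnn : ∀ j q p : ℤ, 0 ≤ T j q p := by
    intro j q p
    rw [hT_def]
    have n1 : (0:ℝ) ≤ (if j ≤ q ∧ j ≤ p then γ ^ (((j:ℝ) - (q:ℝ) - (p:ℝ))/3) else 0) := by
      split_ifs <;> positivity
    have n2 : (0:ℝ) ≤ (if p ≤ j ∧ p ≤ q then γ ^ (((p:ℝ) - (j:ℝ) - (q:ℝ))/3) else 0) := by
      split_ifs <;> positivity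
    have n3 : (0:ℝ) ≤ (if q ≤ j ∧ q ≤ p then γ ^ ((3*(q:ℝ) - (j:ℝ) - 5*(p:ℝ))/9) else 0) := by
      split_ifs <;> positivity
    dsimp only
    linarith
  -- per-triple estimate
  have hIle : ∀ j ∈ Finset.Icc k N, ∀ q ∈ Finset.Icc k N, ∀ p ∈ Finset.Icc k N,
      (∫⁻ u' : ℝ × ℝ, ∫⁻ w : ℝ × ℝ,
        ENNReal.ofReal
          (|v (u' - z')| * ‖g j (u' - w)‖ * ‖g q (u' - w')‖ * ‖g p (w - u)‖))
      ≤ ENNReal.ofReal (c^3 * W * T j q p) := by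
    intro j hj q hq p hp
    -- the inner kernel and convolution-type function
    set F : (ℝ×ℝ) → ℝ≥0∞ := fun u'' => ∫⁻ w, (‖g j (u'' - w)‖₊ : ℝ≥0∞) * (‖g p (w - u)‖₊ : ℝ≥0∞)
      with hF_def
    have measKer : Measurable (fun z : (ℝ×ℝ)×(ℝ×ℝ) =>
        (‖g j (z.1 - z.2)‖₊ : ℝ≥0∞) * (‖g p (z.2 - u)‖₊ : ℝ≥0∞)) :=
      (((hmg j).comp (measurable_fst.sub measurable_snd)).nnnorm.coe_nnreal_ennreal).mul
        (((hmg p).comp (measurable_snd.sub measurable_const)).nnnorm.coe_nnreal_ennreal)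
    have measF : Measurable F := measKer.lintegral_prod_right'
    -- bound on F via (3, 3/2) Hölder
    have FboundA : ∀ u'' : ℝ×ℝ, F u''
        ≤ (∫⁻ x, (‖g j x‖₊ : ℝ≥0∞) ^ (3:ℝ)) ^ ((1:ℝ)/3)
          * (∫⁻ x, (‖g p x‖₊ : ℝ≥0∞) ^ ((3:ℝ)/2)) ^ ((2:ℝ)/3) := by
      intro u''
      have h := holder (fun w => (‖g j (u'' - w)‖₊ : ℝ≥0∞)) (fun w => (‖g p (w - u)‖₊ : ℝ≥0∞))
        3 (3/2) ⟨by norm_num, by norm_num, by norm_num⟩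
        ((mG j).comp (measurable_const.sub measurable_id))
        ((mG p).comp (measurable_id.sub measurable_const))
      rw [trL (fun x => (‖g j x‖₊ : ℝ≥0∞) ^ (3:ℝ)) ((mG j).pow_const _) u'',
        trR (fun x => (‖g p x‖₊ : ℝ≥0∞) ^ ((3:ℝ)/2)) ((mG p).pow_const _) u] at h
      calc F u'' ≤ (∫⁻ x, (‖g j x‖₊ : ℝ≥0∞) ^ (3:ℝ)) ^ ((1:ℝ)/3)
          * (∫⁻ x, (‖g p x‖₊ : ℝ≥0∞) ^ ((3:ℝ)/2)) ^ (1/((3:ℝ)/2)) := h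
        _ = _ := by norm_num
    -- bound on F via (3/2, 3) Hölder
    have FboundB : ∀ u'' : ℝ×ℝ, F u''
        ≤ (∫⁻ x, (‖g j x‖₊ : ℝ≥0∞) ^ ((3:ℝ)/2)) ^ ((2:ℝ)/3)
          * (∫⁻ x, (‖g p x‖₊ : ℝ≥0∞) ^ (3:ℝ)) ^ ((1:ℝ)/3) := by
      intro u''
      have h := holder (fun w => (‖g j (u'' - w)‖₊ : ℝ≥0∞)) (fun w => (‖g p (w - u)‖₊ : ℝ≥0∞))
        (3/2) 3 ⟨by norm_num, by norm_num, by norm_num⟩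
        ((mG j).comp (measurable_const.sub measurable_id))
        ((mG p).comp (measurable_id.sub measurable_const))
      rw [trL (fun x => (‖g j x‖₊ : ℝ≥0∞) ^ ((3:ℝ)/2)) ((mG j).pow_const _) u'',
        trR (fun x => (‖g p x‖₊ : ℝ≥0∞) ^ (3:ℝ)) ((mG p).pow_const _) u] at h
      calc F u'' ≤ (∫⁻ x, (‖g j x‖₊ : ℝ≥0∞) ^ ((3:ℝ)/2)) ^ (1/((3:ℝ)/2))
          * (∫⁻ x, (‖g p x‖₊ : ℝ≥0∞) ^ (3:ℝ)) ^ ((1:ℝ)/3) := h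
        _ = _ := by norm_num
    -- rewriting of the integral
    have hIeq : (∫⁻ u' : ℝ × ℝ, ∫⁻ w : ℝ × ℝ,
        ENNReal.ofReal
          (|v (u' - z')| * ‖g j (u' - w)‖ * ‖g q (u' - w')‖ * ‖g p (w - u)‖))
        = ∫⁻ u', ((‖v (u' - z')‖₊ : ℝ≥0∞) * (‖g q (u' - w')‖₊ : ℝ≥0∞)) * F u' := by
      refine lintegral_congr fun u' => ?_
      rw [hF_def]
      rw [← lintegral_const_mul' _ _ (ENNReal.mul_ne_top ENNReal.coe_ne_top ENNReal.coe_ne_top)]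
      refine lintegral_congr fun w => ?_
      rw [ENNReal.ofReal_mul (by positivity), ENNReal.ofReal_mul (by positivity),
        ENNReal.ofReal_mul (abs_nonneg _), ← Real.enorm_eq_ofReal_abs,
        ofReal_norm, ofReal_norm, ofReal_norm]
      simp only [enorm_eq_nnnorm]
      ring
    -- Hölder in u' for the pair (v, g_q)
    have hVq : ∫⁻ u', (‖v (u' - z')‖₊ : ℝ≥0∞) * (‖g q (u' - w')‖₊ : ℝ≥0∞)
        ≤ ENNReal.ofReal W * ENNReal.ofReal (c * γ ^ (-(q:ℝ)/3)) := by
      have h := holder (fun u' => (‖v (u' - z')‖₊ : ℝ≥0∞)) (fun u' => (‖g q (u' - w')‖₊ : ℝ≥0∞))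
        3 (3/2) ⟨by norm_num, by norm_num, by norm_num⟩
        (mV.comp (measurable_id.sub measurable_const))
        ((mG q).comp (measurable_id.sub measurable_const))
      rw [trR (fun x => (‖v x‖₊ : ℝ≥0∞) ^ (3:ℝ)) (mV.pow_const _) z',
        trR (fun x => (‖g q x‖₊ : ℝ≥0∞) ^ ((3:ℝ)/2)) ((mG q).pow_const _) w'] at h
      refine h.trans ?_
      rw [show (1/((3:ℝ)/2)) = (2:ℝ)/3 by norm_num]
      exact mul_le_mul' fV (f32 q hq)
    -- case A : j is minimal
    have caseA : (∫⁻ u' : ℝ × ℝ, ∫⁻ w : ℝ × ℝ,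
        ENNReal.ofReal
          (|v (u' - z')| * ‖g j (u' - w)‖ * ‖g q (u' - w')‖ * ‖g p (w - u)‖))
        ≤ ENNReal.ofReal (c^3 * W * γ ^ (((j:ℝ) - (q:ℝ) - (p:ℝ))/3)) := by
      have KAbound : (∫⁻ x, (‖g j x‖₊ : ℝ≥0∞) ^ (3:ℝ)) ^ ((1:ℝ)/3)
          * (∫⁻ x, (‖g p x‖₊ : ℝ≥0∞) ^ ((3:ℝ)/2)) ^ ((2:ℝ)/3)
          ≤ ENNReal.ofReal (c * γ ^ ((j:ℝ)/3)) * ENNReal.ofReal (c * γ ^ (-(p:ℝ)/3)) :=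
        mul_le_mul' (f3 j hj) (f32 p hp)
      set KA : ℝ≥0∞ := (∫⁻ x, (‖g j x‖₊ : ℝ≥0∞) ^ (3:ℝ)) ^ ((1:ℝ)/3)
          * (∫⁻ x, (‖g p x‖₊ : ℝ≥0∞) ^ ((3:ℝ)/2)) ^ ((2:ℝ)/3) with hKA
      have hKAne : KA ≠ ⊤ := by
        refine ne_top_of_le_ne_top ?_ KAbound
        exact ENNReal.mul_ne_top ENNReal.ofReal_ne_top ENNReal.ofReal_ne_top
      calc (∫⁻ u' : ℝ × ℝ, ∫⁻ w : ℝ × ℝ,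
          ENNReal.ofReal
            (|v (u' - z')| * ‖g j (u' - w)‖ * ‖g q (u' - w')‖ * ‖g p (w - u)‖))
          = ∫⁻ u', ((‖v (u' - z')‖₊ : ℝ≥0∞) * (‖g q (u' - w')‖₊ : ℝ≥0∞)) * F u' := hIeq
        _ ≤ ∫⁻ u', ((‖v (u' - z')‖₊ : ℝ≥0∞) * (‖g q (u' - w')‖₊ : ℝ≥0∞)) * KA :=
            lintegral_mono fun u' => mul_le_mul_right (FboundA u') _
        _ = (∫⁻ u', (‖v (u' - z')‖₊ : ℝ≥0∞) * (‖g q (u' - w')‖₊ : ℝ≥0∞)) * KA :=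
            lintegral_mul_const' KA _ hKAne
        _ ≤ (ENNReal.ofReal W * ENNReal.ofReal (c * γ ^ (-(q:ℝ)/3)))
            * (ENNReal.ofReal (c * γ ^ ((j:ℝ)/3)) * ENNReal.ofReal (c * γ ^ (-(p:ℝ)/3))) :=
            mul_le_mul' hVq KAbound
        _ = ENNReal.ofReal (c^3 * W * γ ^ (((j:ℝ) - (q:ℝ) - (p:ℝ))/3)) := by
            rw [← ENNReal.ofReal_mul hW0, ← ENNReal.ofReal_mul (by positivity),
              ← ENNReal.ofReal_mul (by positivity)]
            congr 1
            rw [rpow_prod2 hγ0 c c, mul_assoc W, rpow_prod2 hγ0 c (c*c),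
              show -(q:ℝ)/3 + ((j:ℝ)/3 + -(p:ℝ)/3) = ((j:ℝ) - (q:ℝ) - (p:ℝ))/3 from by ring]
            ring
      -- case B : p is minimal
    have caseB : (∫⁻ u' : ℝ × ℝ, ∫⁻ w : ℝ × ℝ,
        ENNReal.ofReal
          (|v (u' - z')| * ‖g j (u' - w)‖ * ‖g q (u' - w')‖ * ‖g p (w - u)‖))
        ≤ ENNReal.ofReal (c^3 * W * γ ^ (((p:ℝ) - (j:ℝ) - (q:ℝ))/3)) := by
      have KAbound : (∫⁻ x, (‖g j x‖₊ : ℝ≥0∞) ^ ((3:ℝ)/2)) ^ ((2:ℝ)/3)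
          * (∫⁻ x, (‖g p x‖₊ : ℝ≥0∞) ^ (3:ℝ)) ^ ((1:ℝ)/3)
          ≤ ENNReal.ofReal (c * γ ^ (-(j:ℝ)/3)) * ENNReal.ofReal (c * γ ^ ((p:ℝ)/3)) :=
        mul_le_mul' (f32 j hj) (f3 p hp)
      set KA : ℝ≥0∞ := (∫⁻ x, (‖g j x‖₊ : ℝ≥0∞) ^ ((3:ℝ)/2)) ^ ((2:ℝ)/3)
          * (∫⁻ x, (‖g p x‖₊ : ℝ≥0∞) ^ (3:ℝ)) ^ ((1:ℝ)/3) with hKA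
      have hKAne : KA ≠ ⊤ := by
        refine ne_top_of_le_ne_top ?_ KAbound
        exact ENNReal.mul_ne_top ENNReal.ofReal_ne_top ENNReal.ofReal_ne_top
      calc (∫⁻ u' : ℝ × ℝ, ∫⁻ w : ℝ × ℝ,
          ENNReal.ofReal
            (|v (u' - z')| * ‖g j (u' - w)‖ * ‖g q (u' - w')‖ * ‖g p (w - u)‖))
          = ∫⁻ u', ((‖v (u' - z')‖₊ : ℝ≥0∞) * (‖g q (u' - w')‖₊ : ℝ≥0∞)) * F u' := hIeq
        _ ≤ ∫⁻ u', ((‖v (u' - z')‖₊ : ℝ≥0∞) * (‖g q (u' - w')‖₊ : ℝ≥0∞)) * KA :=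
            lintegral_mono fun u' => mul_le_mul_right (FboundB u') _
        _ = (∫⁻ u', (‖v (u' - z')‖₊ : ℝ≥0∞) * (‖g q (u' - w')‖₊ : ℝ≥0∞)) * KA :=
            lintegral_mul_const' KA _ hKAne
        _ ≤ (ENNReal.ofReal W * ENNReal.ofReal (c * γ ^ (-(q:ℝ)/3)))
            * (ENNReal.ofReal (c * γ ^ (-(j:ℝ)/3)) * ENNReal.ofReal (c * γ ^ ((p:ℝ)/3))) :=
            mul_le_mul' hVq KAbound
        _ = ENNReal.ofReal (c^3 * W * γ ^ (((p:ℝ) - (j:ℝ) - (q:ℝ))/3)) := by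
            rw [← ENNReal.ofReal_mul hW0, ← ENNReal.ofReal_mul (by positivity),
              ← ENNReal.ofReal_mul (by positivity)]
            congr 1
            rw [rpow_prod2 hγ0 c c, mul_assoc W, rpow_prod2 hγ0 c (c*c),
              show -(q:ℝ)/3 + (-(j:ℝ)/3 + (p:ℝ)/3) = ((p:ℝ) - (j:ℝ) - (q:ℝ))/3 from by ring]
            ring
    -- case C : q is minimal
    have caseC : (∫⁻ u' : ℝ × ℝ, ∫⁻ w : ℝ × ℝ,
        ENNReal.ofReal
          (|v (u' - z')| * ‖g j (u' - w)‖ * ‖g q (u' - w')‖ * ‖g p (w - u)‖))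
        ≤ ENNReal.ofReal (c^3 * W * γ ^ ((3*(q:ℝ) - (j:ℝ) - 5*(p:ℝ))/9)) := by
      set KB : ℝ≥0∞ := ENNReal.ofReal (c^2 * γ ^ (((j:ℝ) - (p:ℝ))/3)) with hKB
      have FleKB : ∀ u'' : ℝ×ℝ, F u'' ≤ KB := by
        intro u''
        refine (FboundA u'').trans ((mul_le_mul' (f3 j hj) (f32 p hp)).trans_eq ?_)
        rw [← ENNReal.ofReal_mul (by positivity), hKB]
        congr 1
        rw [rpow_prod2 hγ0 c c,
          show (j:ℝ)/3 + -(p:ℝ)/3 = ((j:ℝ) - (p:ℝ))/3 from by ring]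
        ring
      -- ∫ F = ∫ G_j ⋅ ∫ G_p
      have intGj_ne : (∫⁻ x, (‖g j x‖₊ : ℝ≥0∞)) ≠ ⊤ :=
        ne_top_of_le_ne_top ENNReal.ofReal_ne_top (f1 j hj)
      have intF : ∫⁻ u'', F u'' = (∫⁻ x, (‖g j x‖₊ : ℝ≥0∞)) * (∫⁻ x, (‖g p x‖₊ : ℝ≥0∞)) := by
        rw [hF_def]
        rw [lintegral_lintegral_swap measKer.aemeasurable]
        have : ∀ w : ℝ×ℝ, ∫⁻ u'', (‖g j (u'' - w)‖₊ : ℝ≥0∞) * (‖g p (w - u)‖₊ : ℝ≥0∞)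
            = (∫⁻ x, (‖g j x‖₊ : ℝ≥0∞)) * (‖g p (w - u)‖₊ : ℝ≥0∞) := by
          intro w
          rw [lintegral_mul_const' _ _ ENNReal.coe_ne_top,
            trR (fun x => (‖g j x‖₊ : ℝ≥0∞)) (mG j) w]
        rw [lintegral_congr this, lintegral_const_mul' _ _ intGj_ne,
          trR (fun x => (‖g p x‖₊ : ℝ≥0∞)) (mG p) u]
      -- ∫ F³ ≤ KB² ∫F
      have intF3 : ∫⁻ u'', (F u'') ^ (3:ℝ)
          ≤ KB * KB * ((∫⁻ x, (‖g j x‖₊ : ℝ≥0∞)) * (∫⁻ x, (‖g p x‖₊ : ℝ≥0∞))) := by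
        rw [← intF, ← lintegral_const_mul' _ _
          (ENNReal.mul_ne_top ENNReal.ofReal_ne_top ENNReal.ofReal_ne_top)]
        refine lintegral_mono fun u'' => ?_
        have h := FleKB u''
        calc (F u'') ^ (3:ℝ) = F u'' * F u'' * F u'' := by
              rw [show (3:ℝ) = ((3:ℕ):ℝ) from by norm_num, ENNReal.rpow_natCast]
              ring
          _ ≤ KB * KB * F u'' := mul_le_mul' (mul_le_mul' h h) le_rfl
      -- (∫F³)^{1/3}
      have intF3root : (∫⁻ u'', (F u'') ^ (3:ℝ)) ^ ((1:ℝ)/3)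
          ≤ ENNReal.ofReal (c^2 * γ ^ ((-(j:ℝ) - 5*(p:ℝ))/9)) := by
        have step : ∫⁻ u'', (F u'') ^ (3:ℝ)
            ≤ ENNReal.ofReal ((c^2 * γ ^ ((-(j:ℝ) - 5*(p:ℝ))/9)) ^ (3:ℕ)) := by
          refine intF3.trans ?_
          have hb : KB * KB * ((∫⁻ x, (‖g j x‖₊ : ℝ≥0∞)) * (∫⁻ x, (‖g p x‖₊ : ℝ≥0∞)))
              ≤ KB * KB * (ENNReal.ofReal (c * γ ^ (-(j:ℝ))) * ENNReal.ofReal (c * γ ^ (-(p:ℝ)))) :=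
            mul_le_mul_right (mul_le_mul' (f1 j hj) (f1 p hp)) _
          refine hb.trans_eq ?_
          rw [hKB, ← ENNReal.ofReal_mul (by positivity), ← ENNReal.ofReal_mul (by positivity),
            ← ENNReal.ofReal_mul (by positivity)]
          congr 1
          exact collapse3 hγ0 hc.le (((j:ℝ) - (p:ℝ))/3) (-(j:ℝ)) (-(p:ℝ))
            ((-(j:ℝ) - 5*(p:ℝ))/9) (by ring)
        calc (∫⁻ u'', (F u'') ^ (3:ℝ)) ^ ((1:ℝ)/3)
            ≤ (ENNReal.ofReal ((c^2 * γ ^ ((-(j:ℝ) - 5*(p:ℝ))/9)) ^ (3:ℕ))) ^ ((1:ℝ)/3) :=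
              ENNReal.rpow_le_rpow step (by norm_num)
          _ = ENNReal.ofReal (c^2 * γ ^ ((-(j:ℝ) - 5*(p:ℝ))/9)) := cube_root (by positivity)
      -- Hölder (3, 3/2) in u' with pair (v, g_q ⋅ F)
      have mGq' : Measurable fun u' : ℝ×ℝ => (‖g q (u' - w')‖₊ : ℝ≥0∞) :=
        (mG q).comp (measurable_id.sub measurable_const)
      have hold1 : ∫⁻ u', (‖v (u' - z')‖₊ : ℝ≥0∞) * ((‖g q (u' - w')‖₊ : ℝ≥0∞) * F u')
          ≤ (∫⁻ x, (‖v x‖₊ : ℝ≥0∞) ^ (3:ℝ)) ^ ((1:ℝ)/3)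
            * (∫⁻ u', ((‖g q (u' - w')‖₊ : ℝ≥0∞) * F u') ^ ((3:ℝ)/2)) ^ ((2:ℝ)/3) := by
        have h := holder (fun u' => (‖v (u' - z')‖₊ : ℝ≥0∞))
          (fun u' => (‖g q (u' - w')‖₊ : ℝ≥0∞) * F u') 3 (3/2) ⟨by norm_num, by norm_num, by norm_num⟩
          (mV.comp (measurable_id.sub measurable_const)) (mGq'.mul measF)
        rw [trR (fun x => (‖v x‖₊ : ℝ≥0∞) ^ (3:ℝ)) (mV.pow_const _) z',
          show (1/((3:ℝ)/2)) = (2:ℝ)/3 by norm_num] at h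
        exact h
      -- Hölder (2,2) for the product
      have hold2 : (∫⁻ u', ((‖g q (u' - w')‖₊ : ℝ≥0∞) * F u') ^ ((3:ℝ)/2)) ^ ((2:ℝ)/3)
          ≤ (∫⁻ x, (‖g q x‖₊ : ℝ≥0∞) ^ (3:ℝ)) ^ ((1:ℝ)/3)
            * (∫⁻ u'', (F u'') ^ (3:ℝ)) ^ ((1:ℝ)/3) := by
        have e2 : ∀ y : ℝ≥0∞, (y ^ ((3:ℝ)/2)) ^ (2:ℝ) = y ^ (3:ℝ) := by
          intro y
          rw [← ENNReal.rpow_mul]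
          norm_num
        have h := holder (fun u' => (‖g q (u' - w')‖₊ : ℝ≥0∞) ^ ((3:ℝ)/2))
          (fun u' => (F u') ^ ((3:ℝ)/2)) 2 2 ⟨by norm_num, by norm_num, by norm_num⟩
          (mGq'.pow_const _) (measF.pow_const _)
        simp only [e2] at h
        have heq : ∫⁻ u', ((‖g q (u' - w')‖₊ : ℝ≥0∞) * F u') ^ ((3:ℝ)/2)
            = ∫⁻ u', (‖g q (u' - w')‖₊ : ℝ≥0∞) ^ ((3:ℝ)/2) * (F u') ^ ((3:ℝ)/2) :=
          lintegral_congr fun u' => ENNReal.mul_rpow_of_nonneg _ _ (by norm_num)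
        rw [heq]
        calc (∫⁻ u', (‖g q (u' - w')‖₊ : ℝ≥0∞) ^ ((3:ℝ)/2) * (F u') ^ ((3:ℝ)/2)) ^ ((2:ℝ)/3)
            ≤ ((∫⁻ u', (‖g q (u' - w')‖₊ : ℝ≥0∞) ^ (3:ℝ)) ^ ((1:ℝ)/2)
              * (∫⁻ u'', (F u'') ^ (3:ℝ)) ^ ((1:ℝ)/2)) ^ ((2:ℝ)/3) :=
              ENNReal.rpow_le_rpow h (by norm_num)
          _ = (∫⁻ u', (‖g q (u' - w')‖₊ : ℝ≥0∞) ^ (3:ℝ)) ^ ((1:ℝ)/3)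
              * (∫⁻ u'', (F u'') ^ (3:ℝ)) ^ ((1:ℝ)/3) := by
              rw [ENNReal.mul_rpow_of_nonneg _ _ (by norm_num), ← ENNReal.rpow_mul,
                ← ENNReal.rpow_mul]
              norm_num
          _ = (∫⁻ x, (‖g q x‖₊ : ℝ≥0∞) ^ (3:ℝ)) ^ ((1:ℝ)/3)
              * (∫⁻ u'', (F u'') ^ (3:ℝ)) ^ ((1:ℝ)/3) := by
              rw [trR (fun x => (‖g q x‖₊ : ℝ≥0∞) ^ (3:ℝ)) ((mG q).pow_const _) w']
      -- assemble case C
      have hIeqC : (∫⁻ u' : ℝ × ℝ, ∫⁻ w : ℝ × ℝ,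
          ENNReal.ofReal
            (|v (u' - z')| * ‖g j (u' - w)‖ * ‖g q (u' - w')‖ * ‖g p (w - u)‖))
          = ∫⁻ u', (‖v (u' - z')‖₊ : ℝ≥0∞) * ((‖g q (u' - w')‖₊ : ℝ≥0∞) * F u') := by
        rw [hIeq]
        exact lintegral_congr fun u' => by ring
      calc (∫⁻ u' : ℝ × ℝ, ∫⁻ w : ℝ × ℝ,
          ENNReal.ofReal
            (|v (u' - z')| * ‖g j (u' - w)‖ * ‖g q (u' - w')‖ * ‖g p (w - u)‖))
          = ∫⁻ u', (‖v (u' - z')‖₊ : ℝ≥0∞) * ((‖g q (u' - w')‖₊ : ℝ≥0∞) * F u') := hIeqC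
        _ ≤ (∫⁻ x, (‖v x‖₊ : ℝ≥0∞) ^ (3:ℝ)) ^ ((1:ℝ)/3)
            * (∫⁻ u', ((‖g q (u' - w')‖₊ : ℝ≥0∞) * F u') ^ ((3:ℝ)/2)) ^ ((2:ℝ)/3) := hold1
        _ ≤ (∫⁻ x, (‖v x‖₊ : ℝ≥0∞) ^ (3:ℝ)) ^ ((1:ℝ)/3)
            * ((∫⁻ x, (‖g q x‖₊ : ℝ≥0∞) ^ (3:ℝ)) ^ ((1:ℝ)/3)
              * (∫⁻ u'', (F u'') ^ (3:ℝ)) ^ ((1:ℝ)/3)) := mul_le_mul_right hold2 _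
        _ ≤ ENNReal.ofReal W * (ENNReal.ofReal (c * γ ^ ((q:ℝ)/3))
              * ENNReal.ofReal (c^2 * γ ^ ((-(j:ℝ) - 5*(p:ℝ))/9))) :=
            mul_le_mul' fV (mul_le_mul' (f3 q hq) intF3root)
        _ = ENNReal.ofReal (c^3 * W * γ ^ ((3*(q:ℝ) - (j:ℝ) - 5*(p:ℝ))/9)) := by
            rw [← ENNReal.ofReal_mul (by positivity), ← ENNReal.ofReal_mul hW0]
            congr 1
            rw [rpow_prod2 hγ0 c (c^2),
              show (q:ℝ)/3 + (-(j:ℝ) - 5*(p:ℝ))/9 = (3*(q:ℝ) - (j:ℝ) - 5*(p:ℝ))/9 from by ring]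
            ring
    -- combine cases via trichotomy
    by_cases hA : j ≤ q ∧ j ≤ p
    · refine caseA.trans (ENNReal.ofReal_le_ofReal ?_)
      refine mul_le_mul_of_nonneg_left ?_ (by positivity)
      rw [hT_def]
      dsimp only
      rw [if_pos hA]
      have n2 : (0:ℝ) ≤ (if p ≤ j ∧ p ≤ q then γ ^ (((p:ℝ) - (j:ℝ) - (q:ℝ))/3) else 0) := by
        split_ifs <;> positivity
      have n3 : (0:ℝ) ≤ (if q ≤ j ∧ q ≤ p then γ ^ ((3*(q:ℝ) - (j:ℝ) - 5*(p:ℝ))/9) else 0) := by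
        split_ifs <;> positivity
      linarith
    · by_cases hBc : p ≤ j ∧ p ≤ q
      · refine caseB.trans (ENNReal.ofReal_le_ofReal ?_)
        refine mul_le_mul_of_nonneg_left ?_ (by positivity)
        rw [hT_def]
        dsimp only
        rw [if_pos hBc]
        have n1 : (0:ℝ) ≤ (if j ≤ q ∧ j ≤ p then γ ^ (((j:ℝ) - (q:ℝ) - (p:ℝ))/3) else 0) := by
          split_ifs <;> positivity
        have n3 : (0:ℝ) ≤ (if q ≤ j ∧ q ≤ p then γ ^ ((3*(q:ℝ) - (j:ℝ) - 5*(p:ℝ))/9) else 0) := by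
          split_ifs <;> positivity
        linarith
      · have hCc : q ≤ j ∧ q ≤ p := by omega
        refine caseC.trans (ENNReal.ofReal_le_ofReal ?_)
        refine mul_le_mul_of_nonneg_left ?_ (by positivity)
        rw [hT_def]
        dsimp only
        rw [if_pos hCc]
        have n1 : (0:ℝ) ≤ (if j ≤ q ∧ j ≤ p then γ ^ (((j:ℝ) - (q:ℝ) - (p:ℝ))/3) else 0) := by
          split_ifs <;> positivity
        have n2 : (0:ℝ) ≤ (if p ≤ j ∧ p ≤ q then γ ^ (((p:ℝ) - (j:ℝ) - (q:ℝ))/3) else 0) := by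
          split_ifs <;> positivity
        linarith
  -- conversion between rpow of γ and zpow of t
  have tconv : ∀ n : ℤ, t ^ n = γ ^ (-(n:ℝ)/9) := by
    intro n
    rw [ht_def, ← Real.rpow_intCast (γ ^ (-(1/9:ℝ))) n, ← Real.rpow_mul hγ0.le]
    congr 1
    push_cast
    ring
  -- the summation bound
  have sumT : ∑ j ∈ Finset.Icc k N, ∑ q ∈ Finset.Icc k N, ∑ p ∈ Finset.Icc k N, T j q p
      ≤ C0 * γ ^ (-(k:ℝ)/3) := by
    have e1 : ∀ j q p : ℤ, (if j ≤ q ∧ j ≤ p then γ ^ (((j:ℝ) - (q:ℝ) - (p:ℝ))/3) else 0)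
        = (if j ≤ q ∧ j ≤ p then t ^ (3*q + 3*p - 3*j) else 0) := by
      intro j q p
      split_ifs with h
      · rw [tconv]; congr 1; push_cast; ring
      · rfl
    have e2 : ∀ j q p : ℤ, (if p ≤ j ∧ p ≤ q then γ ^ (((p:ℝ) - (j:ℝ) - (q:ℝ))/3) else 0)
        = (if p ≤ j ∧ p ≤ q then t ^ (3*j + 3*q - 3*p) else 0) := by
      intro j q p
      split_ifs with h
      · rw [tconv]; congr 1; push_cast; ring
      · rfl
    have e3 : ∀ j q p : ℤ, (if q ≤ j ∧ q ≤ p then γ ^ ((3*(q:ℝ) - (j:ℝ) - 5*(p:ℝ))/9) else 0)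
        = (if q ≤ j ∧ q ≤ p then t ^ (1*j + 5*p - 3*q) else 0) := by
      intro j q p
      split_ifs with h
      · rw [tconv]; congr 1; push_cast; ring
      · rfl
    have splitT : ∑ j ∈ Finset.Icc k N, ∑ q ∈ Finset.Icc k N, ∑ p ∈ Finset.Icc k N, T j q p
        = (∑ j ∈ Finset.Icc k N, ∑ q ∈ Finset.Icc k N, ∑ p ∈ Finset.Icc k N,
            (if j ≤ q ∧ j ≤ p then t ^ (3*q + 3*p - 3*j) else 0))
          + (∑ j ∈ Finset.Icc k N, ∑ q ∈ Finset.Icc k N, ∑ p ∈ Finset.Icc k N,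
            (if p ≤ j ∧ p ≤ q then t ^ (3*j + 3*q - 3*p) else 0))
          + (∑ j ∈ Finset.Icc k N, ∑ q ∈ Finset.Icc k N, ∑ p ∈ Finset.Icc k N,
            (if q ≤ j ∧ q ≤ p then t ^ (1*j + 5*p - 3*q) else 0)) := by
      rw [hT_def]
      simp only [Finset.sum_add_distrib, e1, e2, e3]
    have S1 : ∑ j ∈ Finset.Icc k N, ∑ q ∈ Finset.Icc k N, ∑ p ∈ Finset.Icc k N,
        (if j ≤ q ∧ j ≤ p then t ^ (3*q + 3*p - 3*j) else 0)
        ≤ (1/(1-t^(3:ℤ))) * (1/(1-t^(3:ℤ))) * ((t^(3:ℤ))^k / (1 - t^(3:ℤ))) :=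
      triple_geom ht0 ht1 k N 3 3 3 (by norm_num) (by norm_num) (by norm_num)
    have S2 : ∑ j ∈ Finset.Icc k N, ∑ q ∈ Finset.Icc k N, ∑ p ∈ Finset.Icc k N,
        (if p ≤ j ∧ p ≤ q then t ^ (3*j + 3*q - 3*p) else 0)
        ≤ (1/(1-t^(3:ℤ))) * (1/(1-t^(3:ℤ))) * ((t^(3:ℤ))^k / (1 - t^(3:ℤ))) := by
      calc ∑ j ∈ Finset.Icc k N, ∑ q ∈ Finset.Icc k N, ∑ p ∈ Finset.Icc k N,
          (if p ≤ j ∧ p ≤ q then t ^ (3*j + 3*q - 3*p) else 0)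
          = ∑ j ∈ Finset.Icc k N, ∑ p ∈ Finset.Icc k N, ∑ q ∈ Finset.Icc k N,
            (if p ≤ j ∧ p ≤ q then t ^ (3*j + 3*q - 3*p) else 0) :=
            Finset.sum_congr rfl fun j _ => Finset.sum_comm
        _ = ∑ p ∈ Finset.Icc k N, ∑ j ∈ Finset.Icc k N, ∑ q ∈ Finset.Icc k N,
            (if p ≤ j ∧ p ≤ q then t ^ (3*j + 3*q - 3*p) else 0) := Finset.sum_comm
        _ ≤ _ := triple_geom ht0 ht1 k N 3 3 3 (by norm_num) (by norm_num) (by norm_num)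
    have S3 : ∑ j ∈ Finset.Icc k N, ∑ q ∈ Finset.Icc k N, ∑ p ∈ Finset.Icc k N,
        (if q ≤ j ∧ q ≤ p then t ^ (1*j + 5*p - 3*q) else 0)
        ≤ (1/(1-t^(1:ℤ))) * (1/(1-t^(5:ℤ))) * ((t^(3:ℤ))^k / (1 - t^(3:ℤ))) := by
      calc ∑ j ∈ Finset.Icc k N, ∑ q ∈ Finset.Icc k N, ∑ p ∈ Finset.Icc k N,
          (if q ≤ j ∧ q ≤ p then t ^ (1*j + 5*p - 3*q) else 0)
          = ∑ q ∈ Finset.Icc k N, ∑ j ∈ Finset.Icc k N, ∑ p ∈ Finset.Icc k N,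
            (if q ≤ j ∧ q ≤ p then t ^ (1*j + 5*p - 3*q) else 0) := Finset.sum_comm
        _ ≤ _ := triple_geom ht0 ht1 k N 1 5 3 (by norm_num) (by norm_num) (by norm_num)
    have tk : (t^(3:ℤ))^k = γ ^ (-(k:ℝ)/3) := by
      rw [← zpow_mul, tconv]
      congr 1
      push_cast
      ring
    calc ∑ j ∈ Finset.Icc k N, ∑ q ∈ Finset.Icc k N, ∑ p ∈ Finset.Icc k N, T j q p
        ≤ ((1/(1-t^(3:ℤ))) * (1/(1-t^(3:ℤ))) + (1/(1-t^(3:ℤ))) * (1/(1-t^(3:ℤ)))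
            + (1/(1-t^(1:ℤ))) * (1/(1-t^(5:ℤ)))) * ((t^(3:ℤ))^k / (1 - t^(3:ℤ))) := by
          rw [splitT]
          linarith
      _ = C0 * γ ^ (-(k:ℝ)/3) := by
          rw [hC0_def, tk]
          ring
  -- final assembly
  calc ∑ j ∈ Finset.Icc k N, ∑ q ∈ Finset.Icc k N, ∑ p ∈ Finset.Icc k N,
      (∫⁻ u' : ℝ × ℝ, ∫⁻ w : ℝ × ℝ,
        ENNReal.ofReal
          (|v (u' - z')| * ‖g j (u' - w)‖ * ‖g q (u' - w')‖ * ‖g p (w - u)‖))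
      ≤ ∑ j ∈ Finset.Icc k N, ∑ q ∈ Finset.Icc k N, ∑ p ∈ Finset.Icc k N,
        ENNReal.ofReal (c^3 * W * T j q p) :=
        Finset.sum_le_sum fun j hj => Finset.sum_le_sum fun q hq =>
          Finset.sum_le_sum fun p hp => hIle j hj q hq p hp
    _ = ENNReal.ofReal (∑ j ∈ Finset.Icc k N, ∑ q ∈ Finset.Icc k N, ∑ p ∈ Finset.Icc k N,
        c^3 * W * T j q p) := by
        rw [ENNReal.ofReal_sum_of_nonneg fun j _ => Finset.sum_nonneg fun q _ =>
          Finset.sum_nonneg fun p _ => by positivity]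
        refine Finset.sum_congr rfl fun j _ => ?_
        rw [ENNReal.ofReal_sum_of_nonneg fun q _ => Finset.sum_nonneg fun p _ => by positivity]
        refine Finset.sum_congr rfl fun q _ => ?_
        rw [ENNReal.ofReal_sum_of_nonneg fun p _ => by positivity]
    _ ≤ ENNReal.ofReal ((c^3 * B3 * C0) * γ ^ ((4 : ℝ) / 3 * (M : ℝ)) * γ ^ (-(k : ℝ) / 3)) := by
        refine ENNReal.ofReal_le_ofReal ?_
        have hfact : ∑ j ∈ Finset.Icc k N, ∑ q ∈ Finset.Icc k N, ∑ p ∈ Finset.Icc k N,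
            c^3 * W * T j q p
            = c^3 * W * ∑ j ∈ Finset.Icc k N, ∑ q ∈ Finset.Icc k N, ∑ p ∈ Finset.Icc k N,
              T j q p := by
          simp only [← Finset.mul_sum]
        rw [hfact]
        calc c^3 * W * ∑ j ∈ Finset.Icc k N, ∑ q ∈ Finset.Icc k N, ∑ p ∈ Finset.Icc k N, T j q p
            ≤ c^3 * W * (C0 * γ ^ (-(k:ℝ)/3)) :=
              mul_le_mul_of_nonneg_left sumT (by positivity)
          _ = (c^3 * B3 * C0) * γ ^ ((4 : ℝ) / 3 * (M : ℝ)) * γ ^ (-(k : ℝ) / 3) := by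
              rw [hW_def]
              ring
end
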